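/- Let R = [c₁,d₁] × [c₂,d₂] ⊂ ℝ² be a closed rectangle with c₁ < d₁ and c₂ < d₂, and let Ω̃ ⊆ R be a measurable subset contained in the interior of R. Let a : ℝ² → ℝ be continuously differentiable on a neighborhood of R, and let u, v : ℝ² → ℝ be twice continuously differentiable on a neighborhood of R. Assume: (i) ∇·(a∇u)(x,y) = 0 for all (x,y) ∈ R; (ii) ∇·(a∇v)(x,y) = (1_{Ω̃}·g)(x,y) for all (x,y) ∈ R, where g : ℝ² → ℝ is continuous on Ω̃; and (iii) v(x,y) = 0 for all (x,y) ∈ ∂R (the four edges of the rectangle). Then ∫_{Ω̃} g·u d(x,y) = ∫_{c₂}^{d₂} (u·a·∂ₓv)(d₁,y) dy − ∫_{c₂}^{d₂} (u·a·∂ₓv)(c₁,y) dy + ∫_{c₁}^{d₁} (u·a·∂_yv)(x,d₂) dx − ∫_{c₁}^{d₁} (u·a·∂_yv)(x,c₂) dx. In other words, the L² pairing of g with the confined solution u|_{Ω̃} of the Dirichlet problem equals the pairing of the boundary data u|_{∂R} with the conormal flux a·∂v/∂n of the adjoint (sourced, zero-boundary) problem (this is the classical-solution form of the paper's Theorem 3.3,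 ⟨g, S̃f⟩_{Ω̃} = ⟨S̃*g, f⟩_{∂Ω}). -/

import Mathlib

open MeasureTheory

/-- Partial derivative in the first coordinate of a function on `ℝ × ℝ`. -/
noncomputable def pderivX (f : ℝ × ℝ → ℝ) (p : ℝ × ℝ) : ℝ :=
  deriv (fun t => f (t, p.2)) p.1

/-- Partial derivative in the second coordinate of a function on `ℝ × ℝ`. -/
noncomputable def pderivY (f : ℝ × ℝ → ℝ) (p : ℝ × ℝ) : ℝ :=
  deriv (fun t => f (p.1, t)) p.2

/-- The weighted divergence-form operator `∇ ⋅ (a ∇ f) = ∂ₓ(a ∂ₓ f) + ∂_y(a ∂_y f)`. -/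
noncomputable def wdiv (a f : ℝ × ℝ → ℝ) (p : ℝ × ℝ) : ℝ :=
  pderivX (fun q => a q * pderivX f q) p + pderivY (fun q => a q * pderivY f q) p

lemma hasDerivAt_sliceX (f : ℝ × ℝ → ℝ) (p : ℝ × ℝ) (hf : DifferentiableAt ℝ f p) :
    HasDerivAt (fun t => f (t, p.2)) (fderiv ℝ f p (1, 0)) p.1 := by
  have h1 : HasDerivAt (fun t : ℝ => (t, p.2)) ((1 : ℝ), (0 : ℝ)) p.1 :=
    (hasDerivAt_id p.1).prodMk (hasDerivAt_const p.1 p.2)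
  exact hf.hasFDerivAt.comp_hasDerivAt p.1 h1

lemma hasDerivAt_sliceY (f : ℝ × ℝ → ℝ) (p : ℝ × ℝ) (hf : DifferentiableAt ℝ f p) :
    HasDerivAt (fun t => f (p.1, t)) (fderiv ℝ f p (0, 1)) p.2 := by
  have h1 : HasDerivAt (fun t : ℝ => (p.1, t)) ((0 : ℝ), (1 : ℝ)) p.2 :=
    (hasDerivAt_const p.2 p.1).prodMk (hasDerivAt_id p.2)
  exact hf.hasFDerivAt.comp_hasDerivAt p.2 h1

lemma pderivX_eq (f : ℝ × ℝ → ℝ) (p : ℝ × ℝ) (hf : DifferentiableAt ℝ f p) :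
    pderivX f p = fderiv ℝ f p (1, 0) := (hasDerivAt_sliceX f p hf).deriv

lemma pderivY_eq (f : ℝ × ℝ → ℝ) (p : ℝ × ℝ) (hf : DifferentiableAt ℝ f p) :
    pderivY f p = fderiv ℝ f p (0, 1) := (hasDerivAt_sliceY f p hf).deriv

lemma pderivX_contDiffOn {f : ℝ × ℝ → ℝ} {s : Set (ℝ × ℝ)} (hs : IsOpen s)
    (hf : ContDiffOn ℝ 2 f s) : ContDiffOn ℝ 1 (pderivX f) s := by
  have h1 : ContDiffOn ℝ 1 (fderiv ℝ f) s :=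
    hf.fderiv_of_isOpen hs (by norm_num)
  refine (h1.clm_apply (contDiffOn_const (c := ((1:ℝ),(0:ℝ))))).congr ?_
  intro x hx
  exact pderivX_eq f x (((hf.differentiableOn (by norm_num)) x hx).differentiableAt
    (hs.mem_nhds hx))

lemma pderivY_contDiffOn {f : ℝ × ℝ → ℝ} {s : Set (ℝ × ℝ)} (hs : IsOpen s)
    (hf : ContDiffOn ℝ 2 f s) : ContDiffOn ℝ 1 (pderivY f) s := by
  have h1 : ContDiffOn ℝ 1 (fderiv ℝ f) s :=
    hf.fderiv_of_isOpen hs (by norm_num)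
  refine (h1.clm_apply (contDiffOn_const (c := ((0:ℝ),(1:ℝ))))).congr ?_
  intro x hx
  exact pderivY_eq f x (((hf.differentiableOn (by norm_num)) x hx).differentiableAt
    (hs.mem_nhds hx))

noncomputable def auxF (a u v : ℝ × ℝ → ℝ) : ℝ × ℝ → ℝ :=
  fun q => u q * (a q * pderivX v q) - v q * (a q * pderivX u q)

noncomputable def auxG (a u v : ℝ × ℝ → ℝ) : ℝ × ℝ → ℝ :=
  fun q => u q * (a q * pderivY v q) - v q * (a q * pderivY u q)

lemma diffAt_of_contDiffOn {f : ℝ × ℝ → ℝ} {s : Set (ℝ × ℝ)} (hs : IsOpen s)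
    (hf : ContDiffOn ℝ 1 f s) {p : ℝ × ℝ} (hp : p ∈ s) : DifferentiableAt ℝ f p :=
  ((hf.differentiableOn one_ne_zero) p hp).differentiableAt (hs.mem_nhds hp)

lemma auxF_contDiffOn {a u v : ℝ × ℝ → ℝ} {s : Set (ℝ × ℝ)} (hs : IsOpen s)
    (ha : ContDiffOn ℝ 1 a s) (hu : ContDiffOn ℝ 2 u s) (hv : ContDiffOn ℝ 2 v s) :
    ContDiffOn ℝ 1 (auxF a u v) s :=
  ((hu.of_le (by norm_num)).mul (ha.mul (pderivX_contDiffOn hs hv))).sub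
    ((hv.of_le (by norm_num)).mul (ha.mul (pderivX_contDiffOn hs hu)))

lemma auxG_contDiffOn {a u v : ℝ × ℝ → ℝ} {s : Set (ℝ × ℝ)} (hs : IsOpen s)
    (ha : ContDiffOn ℝ 1 a s) (hu : ContDiffOn ℝ 2 u s) (hv : ContDiffOn ℝ 2 v s) :
    ContDiffOn ℝ 1 (auxG a u v) s :=
  ((hu.of_le (by norm_num)).mul (ha.mul (pderivY_contDiffOn hs hv))).sub
    ((hv.of_le (by norm_num)).mul (ha.mul (pderivY_contDiffOn hs hu)))

lemma divergence_pointwise {a u v : ℝ × ℝ → ℝ} {s : Set (ℝ × ℝ)} (hs : IsOpen s)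
    (ha : ContDiffOn ℝ 1 a s) (hu : ContDiffOn ℝ 2 u s) (hv : ContDiffOn ℝ 2 v s)
    {p : ℝ × ℝ} (hp : p ∈ s) :
    fderiv ℝ (auxF a u v) p (1, 0) + fderiv ℝ (auxG a u v) p (0, 1)
      = u p * wdiv a v p - v p * wdiv a u p := by
  have hu1 : ContDiffOn ℝ 1 u s := hu.of_le (by norm_num)
  have hv1 : ContDiffOn ℝ 1 v s := hv.of_le (by norm_num)
  have du := diffAt_of_contDiffOn hs hu1 hp
  have dv := diffAt_of_contDiffOn hs hv1 hp
  have daVx := diffAt_of_contDiffOn hs (ha.mul (pderivX_contDiffOn hs hv)) hp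
  have daUx := diffAt_of_contDiffOn hs (ha.mul (pderivX_contDiffOn hs hu)) hp
  have daVy := diffAt_of_contDiffOn hs (ha.mul (pderivY_contDiffOn hs hv)) hp
  have daUy := diffAt_of_contDiffOn hs (ha.mul (pderivY_contDiffOn hs hu)) hp
  have dF := diffAt_of_contDiffOn hs (auxF_contDiffOn hs ha hu hv) hp
  have dG := diffAt_of_contDiffOn hs (auxG_contDiffOn hs ha hu hv) hp
  have hFx : fderiv ℝ (auxF a u v) p (1, 0) = pderivX (auxF a u v) p :=
    (pderivX_eq _ p dF).symm
  have hGy : fderiv ℝ (auxG a u v) p (0, 1) = pderivY (auxG a u v) p :=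
    (pderivY_eq _ p dG).symm
  have e1 : HasDerivAt (fun t => auxF a u v (t, p.2))
      (fderiv ℝ u p (1, 0) * (a p * pderivX v p)
        + u p * fderiv ℝ (fun q => a q * pderivX v q) p (1, 0)
        - (fderiv ℝ v p (1, 0) * (a p * pderivX u p)
        + v p * fderiv ℝ (fun q => a q * pderivX u q) p (1, 0))) p.1 :=
    ((hasDerivAt_sliceX u p du).mul (hasDerivAt_sliceX _ p daVx)).sub
      ((hasDerivAt_sliceX v p dv).mul (hasDerivAt_sliceX _ p daUx))
  have e2 : HasDerivAt (fun t => auxG a u v (p.1, t))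
      (fderiv ℝ u p (0, 1) * (a p * pderivY v p)
        + u p * fderiv ℝ (fun q => a q * pderivY v q) p (0, 1)
        - (fderiv ℝ v p (0, 1) * (a p * pderivY u p)
        + v p * fderiv ℝ (fun q => a q * pderivY u q) p (0, 1))) p.2 :=
    ((hasDerivAt_sliceY u p du).mul (hasDerivAt_sliceY _ p daVy)).sub
      ((hasDerivAt_sliceY v p dv).mul (hasDerivAt_sliceY _ p daUy))
  have hx2 : pderivX (auxF a u v) p
      = fderiv ℝ u p (1, 0) * (a p * pderivX v p)
        + u p * fderiv ℝ (fun q => a q * pderivX v q) p (1, 0)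
        - (fderiv ℝ v p (1, 0) * (a p * pderivX u p)
        + v p * fderiv ℝ (fun q => a q * pderivX u q) p (1, 0)) := e1.deriv
  have hy2 : pderivY (auxG a u v) p
      = fderiv ℝ u p (0, 1) * (a p * pderivY v p)
        + u p * fderiv ℝ (fun q => a q * pderivY v q) p (0, 1)
        - (fderiv ℝ v p (0, 1) * (a p * pderivY u p)
        + v p * fderiv ℝ (fun q => a q * pderivY u q) p (0, 1)) := e2.deriv
  rw [hFx, hGy, hx2, hy2, ← pderivX_eq u p du, ← pderivX_eq v p dv,
    ← pderivX_eq _ p daVx, ← pderivX_eq _ p daUx,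
    ← pderivY_eq u p du, ← pderivY_eq v p dv,
    ← pderivY_eq _ p daVy, ← pderivY_eq _ p daUy]
  unfold wdiv
  ring

/-- Classical-solution form of Theorem 3.3 of the paper
(`⟨g, S̃ f⟩_{Ω̃} = ⟨S̃* g, f⟩_{∂Ω}`): if `u` is `a`-harmonic on the rectangle `R`,
`v` solves the sourced problem `∇⋅(a∇v) = 1_{Ω̃} g` with zero Dirichlet boundary data,
then the pairing of `g` with `u` on `Ω̃` equals the pairing of the boundary values of
`u` with the conormal flux `a ∂v/∂n` on `∂R`. -/
theorem adjoint_map_pairing_identity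
    (c₁ d₁ c₂ d₂ : ℝ) (hc₁ : c₁ < d₁) (hc₂ : c₂ < d₂)
    (Ω' : Set (ℝ × ℝ)) (hΩ'meas : MeasurableSet Ω')
    (hΩ'sub : Ω' ⊆ interior (Set.Icc c₁ d₁ ×ˢ Set.Icc c₂ d₂))
    (g a u v : ℝ × ℝ → ℝ) (s : Set (ℝ × ℝ)) (hs : IsOpen s)
    (hRs : Set.Icc c₁ d₁ ×ˢ Set.Icc c₂ d₂ ⊆ s)
    (ha : ContDiffOn ℝ 1 a s) (hu : ContDiffOn ℝ 2 u s) (hv : ContDiffOn ℝ 2 v s)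
    (hg : ContinuousOn g Ω')
    (huharm : ∀ p ∈ Set.Icc c₁ d₁ ×ˢ Set.Icc c₂ d₂, wdiv a u p = 0)
    (hveq : ∀ p ∈ Set.Icc c₁ d₁ ×ˢ Set.Icc c₂ d₂, wdiv a v p = Set.indicator Ω' g p)
    (hvbdleft : ∀ y ∈ Set.Icc c₂ d₂, v (c₁, y) = 0)
    (hvbdright : ∀ y ∈ Set.Icc c₂ d₂, v (d₁, y) = 0)
    (hvbdbot : ∀ x ∈ Set.Icc c₁ d₁, v (x, c₂) = 0)
    (hvbdtop : ∀ x ∈ Set.Icc c₁ d₁, v (x, d₂) = 0) :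
    (∫ p in Ω', g p * u p)
      = (∫ y in c₂..d₂, u (d₁, y) * a (d₁, y) * pderivX v (d₁, y))
        - (∫ y in c₂..d₂, u (c₁, y) * a (c₁, y) * pderivX v (c₁, y))
        + (∫ x in c₁..d₁, u (x, d₂) * a (x, d₂) * pderivY v (x, d₂))
        - (∫ x in c₁..d₁, u (x, c₂) * a (x, c₂) * pderivY v (x, c₂)) := by
  have hRIcc : Set.Icc ((c₁ : ℝ), c₂) ((d₁ : ℝ), d₂) = Set.Icc c₁ d₁ ×ˢ Set.Icc c₂ d₂ :=
    Set.Icc_prod_eq _ _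
  have hle : ((c₁, c₂) : ℝ × ℝ) ≤ (d₁, d₂) := ⟨hc₁.le, hc₂.le⟩
  have hsubs : Set.Icc ((c₁ : ℝ), c₂) ((d₁ : ℝ), d₂) ⊆ s := by rw [hRIcc]; exact hRs
  have hF := auxF_contDiffOn hs ha hu hv
  have hG := auxG_contDiffOn hs ha hu hv
  have hFc : ContinuousOn (auxF a u v) (Set.Icc ((c₁ : ℝ), c₂) ((d₁ : ℝ), d₂)) :=
    (hF.continuousOn).mono hsubs
  have hGc : ContinuousOn (auxG a u v) (Set.Icc ((c₁ : ℝ), c₂) ((d₁ : ℝ), d₂)) :=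
    (hG.continuousOn).mono hsubs
  have hIooS : Set.Ioo c₁ d₁ ×ˢ Set.Ioo c₂ d₂ ⊆ s :=
    (Set.prod_mono Set.Ioo_subset_Icc_self Set.Ioo_subset_Icc_self).trans hRs
  have Hdf : ∀ x ∈ Set.Ioo c₁ d₁ ×ˢ Set.Ioo c₂ d₂ \ (∅ : Set (ℝ × ℝ)),
      HasFDerivAt (auxF a u v) (fderiv ℝ (auxF a u v) x) x := fun x hx =>
    (diffAt_of_contDiffOn hs hF (hIooS hx.1)).hasFDerivAt
  have Hdg : ∀ x ∈ Set.Ioo c₁ d₁ ×ˢ Set.Ioo c₂ d₂ \ (∅ : Set (ℝ × ℝ)),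
      HasFDerivAt (auxG a u v) (fderiv ℝ (auxG a u v) x) x := fun x hx =>
    (diffAt_of_contDiffOn hs hG (hIooS hx.1)).hasFDerivAt
  have hcontInt : ContinuousOn
      (fun x => fderiv ℝ (auxF a u v) x (1, 0) + fderiv ℝ (auxG a u v) x (0, 1)) s := by
    have h1 := hF.continuousOn_fderiv_of_isOpen hs le_rfl
    have h2 := hG.continuousOn_fderiv_of_isOpen hs le_rfl
    exact (((ContinuousLinearMap.apply ℝ ℝ (((1 : ℝ), (0 : ℝ)))).continuous.comp_continuousOn
      h1).add
      ((ContinuousLinearMap.apply ℝ ℝ (((0 : ℝ), (1 : ℝ)))).continuous.comp_continuousOn h2))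
  have Hi : IntegrableOn
      (fun x => fderiv ℝ (auxF a u v) x (1, 0) + fderiv ℝ (auxG a u v) x (0, 1))
      (Set.Icc ((c₁ : ℝ), c₂) ((d₁ : ℝ), d₂)) :=
    (hcontInt.mono hsubs).integrableOn_compact isCompact_Icc
  have key := integral_divergence_prod_Icc_of_hasFDerivAt_off_countable_of_le
    (auxF a u v) (auxG a u v) (fun x => fderiv ℝ (auxF a u v) x)
    (fun x => fderiv ℝ (auxG a u v) x) ((c₁, c₂) : ℝ × ℝ) ((d₁, d₂) : ℝ × ℝ) hle
    ∅ Set.countable_empty hFc hGc Hdf Hdg Hi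
  have hL1 : ∫ x in Set.Icc ((c₁ : ℝ), c₂) ((d₁ : ℝ), d₂),
      (fderiv ℝ (auxF a u v) x (1, 0) + fderiv ℝ (auxG a u v) x (0, 1))
      = ∫ x in Set.Icc ((c₁ : ℝ), c₂) ((d₁ : ℝ), d₂),
        Set.indicator Ω' (fun p => g p * u p) x := by
    refine setIntegral_congr_fun measurableSet_Icc ?_
    intro p hp
    have hpR : p ∈ Set.Icc c₁ d₁ ×ˢ Set.Icc c₂ d₂ := by rwa [hRIcc] at hp
    have hps : p ∈ s := hRs hpR
    show fderiv ℝ (auxF a u v) p (1, 0) + fderiv ℝ (auxG a u v) p (0, 1)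
      = Set.indicator Ω' (fun p => g p * u p) p
    rw [divergence_pointwise hs ha hu hv hps, huharm p hpR, hveq p hpR]
    by_cases hmem : p ∈ Ω' <;> simp [hmem, mul_comm]
  have hL2 : ∫ x in Set.Icc ((c₁ : ℝ), c₂) ((d₁ : ℝ), d₂),
      Set.indicator Ω' (fun p => g p * u p) x = ∫ p in Ω', g p * u p := by
    rw [setIntegral_indicator hΩ'meas]
    congr 1
    rw [Set.inter_eq_self_of_subset_right]
    rw [hRIcc]
    exact hΩ'sub.trans interior_subset
  have hB1 : (∫ y in c₂..d₂, auxF a u v (d₁, y))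
      = ∫ y in c₂..d₂, u (d₁, y) * a (d₁, y) * pderivX v (d₁, y) := by
    refine intervalIntegral.integral_congr ?_
    intro y hy
    rw [Set.uIcc_of_le hc₂.le] at hy
    simp only [auxF]
    rw [hvbdright y hy]
    ring
  have hB2 : (∫ y in c₂..d₂, auxF a u v (c₁, y))
      = ∫ y in c₂..d₂, u (c₁, y) * a (c₁, y) * pderivX v (c₁, y) := by
    refine intervalIntegral.integral_congr ?_
    intro y hy
    rw [Set.uIcc_of_le hc₂.le] at hy
    simp only [auxF]
    rw [hvbdleft y hy]
    ring
  have hB3 : (∫ x in c₁..d₁, auxG a u v (x, d₂))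
      = ∫ x in c₁..d₁, u (x, d₂) * a (x, d₂) * pderivY v (x, d₂) := by
    refine intervalIntegral.integral_congr ?_
    intro x hx
    rw [Set.uIcc_of_le hc₁.le] at hx
    simp only [auxG]
    rw [hvbdtop x hx]
    ring
  have hB4 : (∫ x in c₁..d₁, auxG a u v (x, c₂))
      = ∫ x in c₁..d₁, u (x, c₂) * a (x, c₂) * pderivY v (x, c₂) := by
    refine intervalIntegral.integral_congr ?_
    intro x hx
    rw [Set.uIcc_of_le hc₁.le] at hx
    simp only [auxG]
    rw [hvbdbot x hx]
    ring
  calc (∫ p in Ω', g p * u p)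
      = ∫ x in Set.Icc ((c₁ : ℝ), c₂) ((d₁ : ℝ), d₂),
          (fderiv ℝ (auxF a u v) x (1, 0) + fderiv ℝ (auxG a u v) x (0, 1)) :=
        (hL1.trans hL2).symm
    _ = (((∫ x in c₁..d₁, auxG a u v (x, d₂)) - ∫ x in c₁..d₁, auxG a u v (x, c₂))
          + ∫ y in c₂..d₂, auxF a u v (d₁, y)) - ∫ y in c₂..d₂, auxF a u v (c₁, y) := key
    _ = _ := by rw [hB1, hB2, hB3, hB4]; ring
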